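/- Let α ∈ [0,1] and τ ∈ [0,1], and define f(κ) := 2 − 2(1−τ)α − 2τακ + ((1+τ)/2)ακ² for κ ∈ (1,2). Then the infimum over κ ∈ (1,2) of max( 2f(κ)/κ², f(κ) ) equals 2 − α + (3 − 2√2)τα, and it is attained at κ = √2. -/

import Mathlib

noncomputable section

/-- For `α, τ ∈ [0,1]` and
`f(κ) = 2 − 2(1−τ)α − 2τακ + ((1+τ)/2)ακ²`, the quantity
`2 − α + (3 − 2√2)τα` is the least value of `max(2f(κ)/κ², f(κ))` over `κ ∈ (1,2)`,
and it is attained at `κ = √2`. -/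
theorem min_g_at_sqrt_two (α τ : ℝ) (hα : α ∈ Set.Icc (0 : ℝ) 1)
    (hτ : τ ∈ Set.Icc (0 : ℝ) 1) :
    IsLeast
      ((fun κ : ℝ =>
          max (2 * (2 - 2 * (1 - τ) * α - 2 * τ * α * κ + ((1 + τ) / 2) * α * κ ^ 2) / κ ^ 2)
            (2 - 2 * (1 - τ) * α - 2 * τ * α * κ + ((1 + τ) / 2) * α * κ ^ 2)) ''
        Set.Ioo (1 : ℝ) 2)
      (2 - α + (3 - 2 * Real.sqrt 2) * τ * α) ∧
    (max (2 * (2 - 2 * (1 - τ) * α - 2 * τ * α * Real.sqrt 2 +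
            ((1 + τ) / 2) * α * (Real.sqrt 2) ^ 2) / (Real.sqrt 2) ^ 2)
        (2 - 2 * (1 - τ) * α - 2 * τ * α * Real.sqrt 2 +
            ((1 + τ) / 2) * α * (Real.sqrt 2) ^ 2))
      = 2 - α + (3 - 2 * Real.sqrt 2) * τ * α := by
  obtain ⟨hα0, hα1⟩ := hα
  obtain ⟨hτ0, hτ1⟩ := hτ
  set s : ℝ := Real.sqrt 2 with hs
  have hs2 : s ^ 2 = 2 := Real.sq_sqrt (by norm_num)
  have hs1 : 1 < s := by
    nlinarith [Real.sqrt_nonneg 2]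
  have hslt2 : s < 2 := by
    nlinarith [Real.sqrt_nonneg 2]
  have hmax : (max (2 * (2 - 2 * (1 - τ) * α - 2 * τ * α * s +
            ((1 + τ) / 2) * α * s ^ 2) / s ^ 2)
        (2 - 2 * (1 - τ) * α - 2 * τ * α * s +
            ((1 + τ) / 2) * α * s ^ 2))
      = 2 - α + (3 - 2 * s) * τ * α := by
    rw [hs2]
    rw [show (2 * (2 - 2 * (1 - τ) * α - 2 * τ * α * s + (1 + τ) / 2 * α * 2) / 2)
        = (2 - 2 * (1 - τ) * α - 2 * τ * α * s + (1 + τ) / 2 * α * 2) by ring]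
    rw [max_self]
    ring
  refine ⟨⟨⟨s, ⟨hs1, hslt2⟩, hmax⟩, ?_⟩, hmax⟩
  rintro y ⟨x, ⟨hx1, hx2⟩, rfl⟩
  simp only
  have hτα : 0 ≤ τ * α := mul_nonneg hτ0 hα0
  rcases le_total x s with hxs | hxs
  · -- use first branch
    refine le_trans ?_ (le_max_left _ _)
    rw [le_div_iff₀ (by positivity : (0:ℝ) < x ^ 2)]
    have hB : 0 ≤ 4 * (τ * α) - (2 * α - 2 + τ * α * (2 * s - 2)) * (x + s) := by
      nlinarith [mul_nonneg hτα (sub_nonneg.2 hxs), mul_nonneg (sub_nonneg.2 hα1) (by nlinarith : (0:ℝ) ≤ x + s), mul_nonneg (mul_nonneg hτα (sub_nonneg.2 hxs)) (by nlinarith : (0:ℝ) ≤ 2 * s - 2)]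
    nlinarith [mul_nonneg (sub_nonneg.2 hxs) hB, hs2]
  · -- use second branch
    refine le_trans ?_ (le_max_right _ _)
    have hB : 0 ≤ -2 * τ + ((1 + τ) / 2) * (x + s) := by
      nlinarith
    nlinarith [mul_nonneg (mul_nonneg hα0 (sub_nonneg.2 hxs)) hB, hs2]
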